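/- In the nef-partition setting, if v is a vertex of P_∇ written v = v₁ + ⋯ + v_r with v_j primitive ray generators of Σ satisfying φ_i(v_j) = δ_{ij}, and σ̌ is a maximal cell of P_∇ containing v with affine span A_σ̌ = {x ∈ N_ℝ | ⟨m_i, x⟩ = 1, i=1,…,r} (where m_i ∈ M defines φ_i on C(σ*)), then A_σ̌ ∩ Span(v₁,…,v_r) = {v}, and the projection A_σ̌ → N_ℝ/Span(v₁,…,v_r) is an affine isomorphism mapping A_σ̌ ∩ N isomorphically onto N/(Span(v₁,…,v_r) ∩ N). -/

import Mathlib

open scoped Pointwise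

namespace BB

abbrev V (n : ℕ) : Type := Fin n → ℝ

/-- The standard pairing between `M_ℝ` and `N_ℝ` (both identified with `ℝⁿ`). -/
def pair {n : ℕ} (m v : V n) : ℝ := ∑ i, m i * v i

/-- A point of `ℝⁿ` is a lattice point if all its coordinates are integers. -/
def IsLatticePt {n : ℕ} (m : V n) : Prop := ∀ i, ∃ z : ℤ, m i = (z : ℝ)

/-- A lattice polytope: convex hull of finitely many lattice points. -/
def IsLatticePolytope {n : ℕ} (P : Set (V n)) : Prop :=
  ∃ S : Finset (V n), (∀ m ∈ S, IsLatticePt m) ∧ P = convexHull ℝ (S : Set (V n))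

/-- The polar dual `P* = {v | ⟨m,v⟩ ≥ -1 for all m ∈ P}`. -/
def polar {n : ℕ} (P : Set (V n)) : Set (V n) := {v | ∀ m ∈ P, -1 ≤ pair m v}

/-- A reflexive polytope: a lattice polytope with `0` in its interior whose polar
dual is again a lattice polytope. -/
def IsReflexive {n : ℕ} (P : Set (V n)) : Prop :=
  IsLatticePolytope P ∧ (0 : V n) ∈ interior P ∧ IsLatticePolytope (polar P)

/-- The support function `supp P v = -inf{⟨m,v⟩ | m ∈ P}`; for `P = Δᵢ` and `v ∈ N_ℝ`
this is the piecewise linear function `φᵢ(v)` of the nef-partition. -/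
noncomputable def supp {n : ℕ} (P : Set (V n)) (v : V n) : ℝ :=
  sSup ((fun m => -(pair m v)) '' P)

end BB


namespace BB

/-- `F` is a face of the convex set `P` (an exposed subset). -/
def IsFaceOf {n : ℕ} (F P : Set (V n)) : Prop := IsExposed ℝ P F

/- Auxiliary lemmas -/

lemma pair_add' {n : ℕ} (m x y : V n) : pair m (x + y) = pair m x + pair m y := by
  simp [pair, mul_add, Finset.sum_add_distrib]

lemma pair_sub' {n : ℕ} (m x y : V n) : pair m (x - y) = pair m x - pair m y := by
  simp [pair, mul_sub, Finset.sum_sub_distrib]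

lemma pair_smul' {n : ℕ} (m : V n) (c : ℝ) (x : V n) :
    pair m (c • x) = c * pair m x := by
  simp [pair, Finset.mul_sum, mul_left_comm]

lemma pair_sum' {n r : ℕ} (m : V n) (f : Fin r → V n) :
    pair m (∑ j, f j) = ∑ j, pair m (f j) := by
  simp only [pair, Finset.sum_apply, Finset.mul_sum]
  exact Finset.sum_comm

lemma pair_int' {n : ℕ} {m w : V n} (hm : IsLatticePt m) (hw : IsLatticePt w) :
    ∃ z : ℤ, pair m w = (z : ℝ) := by
  choose a ha using hm
  choose b hb using hw
  exact ⟨∑ i, a i * b i, by simp [pair, ha, hb]⟩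

theorem stmt8 {n r : ℕ} (Δ : Set (V n)) (D : Fin r → Set (V n))
    (hΔrefl : IsReflexive Δ)
    (hDlat : ∀ i, IsLatticePolytope (D i))
    (hΔ : Δ = ∑ i, D i)
    (E : Finset (V n))
    (hE : (E : Set (V n)) = Set.extremePoints ℝ (polar Δ))
    (hnef : ∀ i, ∀ e ∈ E, supp (D i) e = 0 ∨ supp (D i) e = 1)
    (Nb : Fin r → Set (V n))
    (hNb : ∀ i, Nb i = convexHull ℝ ({0} ∪ {e : V n | e ∈ E ∧ supp (D i) e = 1}))
    -- v = v₁ + ⋯ + v_r a vertex of P_∇, with vⱼ ray generators and φᵢ(vⱼ) = δᵢⱼ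
    (v : Fin r → V n)
    (hv : ∀ j, v j ∈ E)
    (hvd : ∀ i j, supp (D i) (v j) = if i = j then (1:ℝ) else 0)
    -- σ̌ a maximal cell of P_∇ containing the vertex: σ* a maximal proper face of Δ*
    -- containing all the vⱼ, and mᵢ ∈ M defining φᵢ on C(σ*)
    (σs : Set (V n))
    (hface : IsFaceOf σs (polar Δ))
    (hproper : σs ≠ polar Δ)
    (hmaxface : Module.finrank ℝ (vectorSpan ℝ σs) = n - 1)
    (hvin : ∀ j, v j ∈ σs)
    (hchkne : (∑ i, {x ∈ σs | supp (D i) x = 1}).Nonempty)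
    (m : Fin r → V n)
    (hmlat : ∀ i, IsLatticePt (m i))
    (hm : ∀ i, ∀ x ∈ σs, pair (m i) x = supp (D i) x)
    -- the affine span A_σ̌ = {x | ⟨mᵢ,x⟩ = 1, i = 1,…,r}
    (A : Set (V n))
    (hA : A = {x : V n | ∀ i, pair (m i) x = 1}) :
    -- A_σ̌ ∩ Span(v₁,…,v_r) = {v}
    A ∩ (Submodule.span ℝ (Set.range v) : Set (V n)) = {∑ j, v j} ∧
    -- the projection A_σ̌ → N_ℝ/Span(v₁,…,v_r) is an affine isomorphism …
    Set.BijOn (Submodule.span ℝ (Set.range v)).mkQ A Set.univ ∧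
    -- … mapping A_σ̌ ∩ N isomorphically onto N/(Span(v₁,…,v_r) ∩ N)
    (Submodule.span ℝ (Set.range v)).mkQ '' (A ∩ {x | IsLatticePt x})
      = (Submodule.span ℝ (Set.range v)).mkQ '' {x | IsLatticePt x} := by
  set W : Submodule ℝ (V n) := Submodule.span ℝ (Set.range v) with hW
  -- ⟨mᵢ, vⱼ⟩ = δᵢⱼ
  have hpv : ∀ i j, pair (m i) (v j) = if i = j then (1:ℝ) else 0 := fun i j =>
    (hm i (v j) (hvin j)).trans (hvd i j)
  -- pairing with a combination of the vⱼ picks out the coefficient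
  have hsum : ∀ (c : Fin r → ℝ) (i : Fin r), pair (m i) (∑ j, c j • v j) = c i := by
    intro c i
    rw [pair_sum']
    simp [pair_smul', hpv]
  -- vⱼ are lattice points
  have hvlat : ∀ j, IsLatticePt (v j) := by
    intro j
    obtain ⟨S, hSlat, hSeq⟩ := hΔrefl.2.2
    have hmem : v j ∈ Set.extremePoints ℝ (polar Δ) := by
      rw [← hE]; exact_mod_cast hv j
    rw [hSeq] at hmem
    exact hSlat _ (extremePoints_convexHull_subset hmem)
  -- the adjustment map
  set adj : V n → V n := fun w => w + ∑ i, (1 - pair (m i) w) • v i with hadj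
  have hadjA : ∀ w, adj w ∈ A := by
    intro w
    rw [hA]
    intro i
    simp only [hadj, pair_add', hsum]
    ring
  have hmemW : ∀ w, (∑ i, (1 - pair (m i) w) • v i) ∈ W := by
    intro w
    exact Submodule.sum_mem _ fun i _ =>
      Submodule.smul_mem _ _ (Submodule.subset_span ⟨i, rfl⟩)
  have hadjQ : ∀ w, W.mkQ (adj w) = W.mkQ w := by
    intro w
    rw [Submodule.mkQ_apply, Submodule.mkQ_apply, Submodule.Quotient.eq]
    simpa [hadj] using hmemW w
  have hadjLat : ∀ w, IsLatticePt w → IsLatticePt (adj w) := by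
    intro w hw
    have hint : ∀ i, ∃ z : ℤ, pair (m i) w = (z : ℝ) := fun i => pair_int' (hmlat i) hw
    choose z hz using hint
    choose zw hzw using hw
    have ha : ∀ j k, ∃ z : ℤ, v j k = (z : ℝ) := fun j => hvlat j
    choose a ha using ha
    intro k
    refine ⟨zw k + ∑ i, (1 - z i) * a i k, ?_⟩
    have : adj w k = w k + ∑ i, (1 - pair (m i) w) * v i k := by
      simp [hadj, Finset.sum_apply]
    rw [this]
    simp only [hz, hzw, ha]
    push_cast
    ring
  -- injectivity on A
  have hinj : Set.InjOn W.mkQ A := by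
    intro x hx y hy hxy
    rw [Submodule.mkQ_apply, Submodule.mkQ_apply, Submodule.Quotient.eq] at hxy
    rw [hW, Submodule.mem_span_range_iff_exists_fun ℝ] at hxy
    obtain ⟨c, hc⟩ := hxy
    rw [hA] at hx hy
    have hc0 : ∀ i, c i = 0 := by
      intro i
      have := hsum c i
      rw [hc, pair_sub', hx i, hy i] at this
      linarith
    have : x - y = 0 := by
      rw [← hc]
      simp [hc0]
    exact sub_eq_zero.mp this
  refine ⟨?_, ⟨fun _ _ => trivial, hinj, ?_⟩, ?_⟩
  · -- A ∩ W = {∑ v j}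
    ext x
    simp only [Set.mem_inter_iff, SetLike.mem_coe, Set.mem_singleton_iff]
    constructor
    · rintro ⟨hxA, hxW⟩
      rw [hW, Submodule.mem_span_range_iff_exists_fun ℝ] at hxW
      obtain ⟨c, hc⟩ := hxW
      rw [hA] at hxA
      have hc1 : ∀ i, c i = 1 := by
        intro i
        have := hsum c i
        rw [hc, hxA i] at this
        linarith
      rw [← hc]
      exact Finset.sum_congr rfl fun j _ => by rw [hc1 j, one_smul]
    · rintro rfl
      constructor
      · rw [hA]
        intro i
        have := hsum (fun _ => 1) i
        simpa using this
      · exact Submodule.sum_mem _ fun j _ => Submodule.subset_span ⟨j, rfl⟩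
  · -- surjectivity
    intro q _
    obtain ⟨w, rfl⟩ := Submodule.mkQ_surjective W q
    exact ⟨adj w, hadjA w, hadjQ w⟩
  · -- lattice points
    apply Set.Subset.antisymm
    · exact Set.image_mono Set.inter_subset_right
    · rintro _ ⟨w, hw, rfl⟩
      exact ⟨adj w, ⟨hadjA w, hadjLat w hw⟩, hadjQ w⟩

end BB
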